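/- The 32×32 matrix Bᵀ (the transpose of the block B built from sixteen copies of a 4×4 matrix A over a commutative ring) equals the block matrix built in the same way from Aᵀ, except that the order of vertices along each coordinate axis is reversed, i.e., every vertex coordinate is replaced via 0↦1, 1↦0. -/

import Mathlib

open Matrix MvPolynomial

abbrev Edge := Fin 4 × (Fin 3 → Fin 2)
abbrev Vtx := Fin 4 → Fin 2

/-- Lexicographic position of a 3-bit edge label. -/
def toFin8 (s : Fin 3 → Fin 2) : Fin 8 :=
  ⟨4 * (s 0).val + 2 * (s 1).val + (s 2).val, by
    have := (s 0).isLt; have := (s 1).isLt; have := (s 2).isLt; omega⟩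

/-- The edge through vertex `c` parallel to axis `i`, labeled by the
remaining three coordinates of `c`. -/
def edgeAt (c : Vtx) (i : Fin 4) : Edge := (i, fun l => c (i.succAbove l))

/-- The 32×32 matrix that is the identity except for the 4×4 submatrix on the
four edges through vertex `c`, where it equals `A`. -/
def bigA {R : Type*} [CommRing R] (A : Matrix (Fin 4) (Fin 4) R) (c : Vtx) :
    Matrix Edge Edge R := fun e f =>
  if (fun l => c (e.1.succAbove l)) = e.2 then
    (if (fun l => c (f.1.succAbove l)) = f.2 then A e.1 f.1 else 0)
  else if e = f then 1 else 0

/-- The `m`-th vertex of `{0,1}⁴` in lexicographic order. -/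
def vertexOfFin (m : Fin 16) : Vtx :=
  fun i => ⟨m.val / 2 ^ (3 - i.val) % 2, Nat.mod_lt _ (by norm_num)⟩

/-- All sixteen vertices, ordered by increasing coordinate sum. -/
def vertexList : List Vtx :=
  ((List.finRange 16).map vertexOfFin).mergeSort
    (fun c c' => decide ((∑ i, (c i).val) ≤ ∑ i, (c' i).val))

/-- The block `B`: product of the sixteen `bigA` matrices, starting with
vertex `(0,0,0,0)`. -/
def blockB {R : Type*} [CommRing R] (A : Matrix (Fin 4) (Fin 4) R) :
    Matrix Edge Edge R :=
  (vertexList.map (bigA A)).prod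

/-- The thick matrix entry `b_{jk}` of the block. -/
def thick {R : Type*} [CommRing R] (A : Matrix (Fin 4) (Fin 4) R) (j k : Fin 4) :
    Matrix (Fin 3 → Fin 2) (Fin 3 → Fin 2) R :=
  fun s t => blockB A (j, s) (k, t)

/-- Embedding of an 8-row of the thick space `V_j` into `F³²`. -/
def embedV {R : Type*} [CommRing R] (j : Fin 4) (x : Fin 8 → R) : Edge → R :=
  fun e => if e.1 = j then x (toFin8 e.2) else 0

/-- The representing polynomial of an 8-row of `V_j`, written in the three
variables `u_l`, `l ≠ j`. -/
noncomputable def repAt {R : Type*} [CommRing R] (j : Fin 4) (x : Fin 8 → R) :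
    MvPolynomial (Fin 4) R :=
  ∑ s : Fin 3 → Fin 2, MvPolynomial.C (x (toFin8 s)) *
    ∏ l, if s l = 0 then MvPolynomial.X (j.succAbove l) else 1

/-- The (unsigned) `(i,j)` cofactor: determinant with row `i` and column `j`
deleted. -/
def cof {R : Type*} [CommRing R] (M : Matrix (Fin 4) (Fin 4) R) (i j : Fin 4) : R :=
  (M.submatrix i.succAbove j.succAbove).det

/-- The matrix `C = A + diag(u₁,u₂,u₃,u₄)`. -/
noncomputable def Cmat {R : Type*} [CommRing R] (A : Matrix (Fin 4) (Fin 4) R) :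
    Matrix (Fin 4) (Fin 4) (MvPolynomial (Fin 4) R) :=
  A.map MvPolynomial.C + Matrix.diagonal (fun i => MvPolynomial.X i)

abbrev Fgen := FractionRing (MvPolynomial (Fin 4 × Fin 4) (ZMod 2))

noncomputable def Agen : Matrix (Fin 4) (Fin 4) Fgen :=
  fun p q => algebraMap (MvPolynomial (Fin 4 × Fin 4) (ZMod 2)) Fgen
    (MvPolynomial.X (p, q))

/-- Coordinate flip `0 ↦ 1`, `1 ↦ 0` on `Fin 2`. -/
def flip2 (b : Fin 2) : Fin 2 := if b = 0 then 1 else 0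


set_option maxRecDepth 20000 in
theorem vertexList_reverse_eq :
    vertexList.reverse = vertexList.map (fun c i => flip2 (c i)) := by
  simp only [vertexList, List.finRange, List.ofFn, Fin.foldr, Fin.foldr.loop, List.map,
    List.mergeSort, List.MergeSort.Internal.splitInTwo, List.splitAt_eq, List.take_succ_cons, List.drop_succ_cons, List.take_zero, List.drop_zero, List.reverse, List.reverseAux]
  simp only [
    show vertexOfFin ⟨0, by omega⟩ = ![0,0,0,0] from by decide,
    show vertexOfFin ⟨1, by omega⟩ = ![0,0,0,1] from by decide,
    show vertexOfFin ⟨2, by omega⟩ = ![0,0,1,0] from by decide,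
    show vertexOfFin ⟨3, by omega⟩ = ![0,0,1,1] from by decide,
    show vertexOfFin ⟨4, by omega⟩ = ![0,1,0,0] from by decide,
    show vertexOfFin ⟨5, by omega⟩ = ![0,1,0,1] from by decide,
    show vertexOfFin ⟨6, by omega⟩ = ![0,1,1,0] from by decide,
    show vertexOfFin ⟨7, by omega⟩ = ![0,1,1,1] from by decide,
    show vertexOfFin ⟨8, by omega⟩ = ![1,0,0,0] from by decide,
    show vertexOfFin ⟨9, by omega⟩ = ![1,0,0,1] from by decide,
    show vertexOfFin ⟨10, by omega⟩ = ![1,0,1,0] from by decide,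
    show vertexOfFin ⟨11, by omega⟩ = ![1,0,1,1] from by decide,
    show vertexOfFin ⟨12, by omega⟩ = ![1,1,0,0] from by decide,
    show vertexOfFin ⟨13, by omega⟩ = ![1,1,0,1] from by decide,
    show vertexOfFin ⟨14, by omega⟩ = ![1,1,1,0] from by decide,
    show vertexOfFin ⟨15, by omega⟩ = ![1,1,1,1] from by decide]
  norm_num [List.merge, Fin.sum_univ_four, List.mergeSort, List.MergeSort.Internal.splitInTwo,
    List.splitAt_eq, List.take_succ_cons, List.drop_succ_cons, List.take_zero, List.drop_zero]
  simp [Matrix.cons_val, List.merge]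
  decide

theorem bigA_transpose {R : Type*} [CommRing R] (A : Matrix (Fin 4) (Fin 4) R) (c : Vtx) :
    (bigA A c)ᵀ = bigA Aᵀ c := by
  ext e f
  simp only [Matrix.transpose_apply, bigA]
  by_cases hef : e = f
  · subst hef
    by_cases he : (fun l => c (e.1.succAbove l)) = e.2 <;> simp [he]
  · have hfe : f ≠ e := Ne.symm hef
    by_cases he : (fun l => c (e.1.succAbove l)) = e.2 <;>
      by_cases hf : (fun l => c (f.1.succAbove l)) = f.2 <;>
        simp [he, hf, hef, hfe]

/-- The transpose of the block `B` built from sixteen copies of `A` equals the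
block built in the same way from `Aᵀ` with every vertex coordinate flipped
(`0 ↦ 1`, `1 ↦ 0`). -/
theorem blockB_transpose (R : Type*) [CommRing R] (A : Matrix (Fin 4) (Fin 4) R) :
    (blockB A)ᵀ =
      (vertexList.map (fun c => bigA Aᵀ (fun i => flip2 (c i)))).prod := by
  rw [blockB, Matrix.transpose_list_prod, List.map_map]
  have h1 : (Matrix.transpose ∘ bigA A) = bigA Aᵀ := funext (bigA_transpose A)
  rw [h1, ← List.map_reverse, vertexList_reverse_eq, List.map_map]
  rfl
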